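/- Let p > 1, N ≥ 1, and η, ξ ∈ ℝ^N. Then min{1, p−1} |η|² ∫₀¹ |tη − ξ|^{p−2} dt ≤ Φ_p(η,ξ)·η ≤ max{1, p−1} |η|² ∫₀¹ |tη − ξ|^{p−2} dt, where for 1 < p < 2 the integrand is extended by 0 at any t with tη = ξ (the integral is finite since p − 2 > −1). -/

import Mathlib

open MeasureTheory Set intervalIntegral

/-- `|x| ^ r` is interval integrable for `r > -1`. -/
lemma absRpow_intervalIntegrable {r : ℝ} (h : -1 < r) (a b : ℝ) :
    IntervalIntegrable (fun x => |x| ^ r) volume a b := by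
  have H : ∀ c : ℝ, 0 ≤ c → IntervalIntegrable (fun x => |x| ^ r) volume 0 c := by
    intro c hc
    have m := intervalIntegrable_rpow' (a := 0) (b := c) h
    rw [intervalIntegrable_iff, uIoc_of_le hc] at m ⊢
    refine m.congr_fun (fun x hx => ?_) measurableSet_Ioc
    rw [abs_of_pos hx.1]
  have H' : ∀ c : ℝ, IntervalIntegrable (fun x => |x| ^ r) volume 0 c := by
    intro c
    rcases le_total 0 c with hc | hc
    · exact H c hc
    · rw [IntervalIntegrable.iff_comp_neg, neg_zero]
      simpa only [abs_neg] using H (-c) (by linarith)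
  exact (H' a).symm.trans (H' b)

/-- rewrite a real power of a nonneg number through its square. -/
lemma rpow_eq_sq_rpow_half {x : ℝ} (hx : 0 ≤ x) (r : ℝ) :
    x ^ r = (x ^ 2) ^ (r / 2) := by
  rw [← Real.rpow_natCast x 2, ← Real.rpow_mul hx,
    show ((2 : ℕ) : ℝ) * (r / 2) = r by push_cast; ring]

/-- The translated p-Laplacian nonlinearity
`Φ_p(η,ξ) = |η−ξ|^{p−2}(η−ξ) + |ξ|^{p−2}ξ`
(with the convention `|x|^{p−2}x = 0` when `x = 0`). -/
noncomputable def Phi (p : ℝ) {N : ℕ} (η ξ : EuclideanSpace ℝ (Fin N)) :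
    EuclideanSpace ℝ (Fin N) :=
  (‖η - ξ‖ ^ (p - 2)) • (η - ξ) + (‖ξ‖ ^ (p - 2)) • ξ

set_option maxHeartbeats 1000000 in
/-- The dimension-correct two-sided form of the mean value identity (3.5):
`min{1, p−1}|η|² ∫₀¹ |tη − ξ|^{p−2} dt ≤ Φ_p(η,ξ)·η ≤ max{1, p−1}|η|² ∫₀¹ |tη − ξ|^{p−2} dt`
(for `1 < p < 2` the integrand is extended by `0` at any `t` with `tη = ξ`). -/
theorem phi_inner_two_sided_bounds (p : ℝ) (hp : 1 < p) (N : ℕ) (hN : 1 ≤ N)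
    (η ξ : EuclideanSpace ℝ (Fin N)) :
    min 1 (p - 1) * ‖η‖ ^ 2 * (∫ t in (0 : ℝ)..1, ‖t • η - ξ‖ ^ (p - 2))
        ≤ (inner ℝ (Phi p η ξ) η : ℝ) ∧
      (inner ℝ (Phi p η ξ) η : ℝ)
        ≤ max 1 (p - 1) * ‖η‖ ^ 2 * (∫ t in (0 : ℝ)..1, ‖t • η - ξ‖ ^ (p - 2)) := by
  classical
  by_cases hη : η = 0
  · subst hη
    simp
  set A : ℝ := ‖η‖ ^ 2 with hA
  have hA0 : 0 < A := by rw [hA]; exact pow_pos (norm_pos_iff.2 hη) 2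
  set q : ℝ := (p - 2) / 2 with hq
  set u : ℝ → EuclideanSpace ℝ (Fin N) := fun t => t • η - ξ with hu
  set nn : ℝ → ℝ := fun t => inner ℝ (u t) (u t) with hnn
  set s : ℝ → ℝ := fun t => inner ℝ (u t) η with hs
  have hnn_eq : ∀ t, nn t = ‖u t‖ ^ 2 := fun t => real_inner_self_eq_norm_sq (u t)
  have hnn_nonneg : ∀ t, 0 ≤ nn t := fun t => (hnn_eq t) ▸ sq_nonneg _
  have hCS : ∀ t, s t ^ 2 ≤ nn t * A := by
    intro t
    have h1 := real_inner_mul_inner_self_le (u t) η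
    rw [real_inner_self_eq_norm_sq, real_inner_self_eq_norm_sq] at h1
    rw [hnn_eq t, hA, pow_two]
    exact h1
  have hs_zero : ∀ t, nn t = 0 → s t = 0 := by
    intro t ht
    have h1 := hCS t
    rw [ht, zero_mul] at h1
    nlinarith [sq_nonneg (s t)]
  have hu_cont : Continuous u := (continuous_id.smul continuous_const).sub continuous_const
  have hnn_cont : Continuous nn := hu_cont.inner hu_cont
  have hs_cont : Continuous s := hu_cont.inner continuous_const
  have hu_deriv : ∀ t : ℝ, HasDerivAt u η t := by
    intro t
    have h := ((hasDerivAt_id t).smul_const η).sub_const ξ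
    rw [one_smul] at h
    exact h
  have hs_deriv : ∀ t : ℝ, HasDerivAt s A t := by
    intro t
    have h1 := (hu_deriv t).inner (𝕜 := ℝ) (hasDerivAt_const t η)
    have h2 : (inner ℝ (u t) (0 : EuclideanSpace ℝ (Fin N)) : ℝ) + inner ℝ η η = A := by
      rw [inner_zero_right, real_inner_self_eq_norm_sq, ← hA, zero_add]
    rw [← h2]
    exact h1
  have hnn_deriv : ∀ t : ℝ, HasDerivAt nn (2 * s t) t := by
    intro t
    have h1 := (hu_deriv t).inner (𝕜 := ℝ) (hu_deriv t)
    have h2 : (2 : ℝ) * s t = inner ℝ (u t) η + inner ℝ η (u t) := by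
      rw [real_inner_comm η (u t), two_mul]
      show (inner ℝ (u t) η : ℝ) + inner ℝ (u t) η = _
      rw [real_inner_comm (u t) η]
    rw [h2]
    exact h1
  set f : ℝ → ℝ := fun t => nn t ^ q * s t with hf
  set D : ℝ → ℝ := fun t => (p - 2) * nn t ^ (q - 1) * s t ^ 2 + nn t ^ q * A with hD
  -- derivative of f away from zeros of nn
  have hf_deriv : ∀ t : ℝ, nn t ≠ 0 → HasDerivAt f (D t) t := by
    intro t ht
    have h1 : HasDerivAt (fun t => nn t ^ q) (q * nn t ^ (q - 1) * (2 * s t)) t :=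
      (Real.hasDerivAt_rpow_const (Or.inl ht)).comp t (hnn_deriv t)
    have h2 := h1.fun_mul (hs_deriv t)
    refine h2.congr_deriv ?_
    show _ = (p - 2) * nn t ^ (q - 1) * s t ^ 2 + nn t ^ q * A
    rw [hq]
    ring
  -- continuity of f
  have hf_cont : Continuous f := by
    rw [continuous_iff_continuousAt]
    intro t
    by_cases ht : nn t = 0
    · have hft : f t = 0 := by
        simp only [hf]
        simp [hs_zero t ht]
      show Filter.Tendsto f (nhds t) (nhds (f t))
      rw [hft]
      have hbound : ∀ x : ℝ, ‖f x‖ ≤ nn x ^ ((p - 1) / 2) * ‖η‖ := by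
        intro x
        have h1 : ‖f x‖ = nn x ^ q * |s x| := by
          rw [Real.norm_eq_abs, hf, abs_mul,
            abs_of_nonneg (Real.rpow_nonneg (hnn_nonneg x) q)]
        have h2 : |s x| ≤ nn x ^ (1 / 2 : ℝ) * ‖η‖ := by
          have h3 : |s x| = Real.sqrt (s x ^ 2) := (Real.sqrt_sq_eq_abs _).symm
          rw [h3]
          calc Real.sqrt (s x ^ 2) ≤ Real.sqrt (nn x * A) := Real.sqrt_le_sqrt (hCS x)
            _ = nn x ^ (1 / 2 : ℝ) * ‖η‖ := by
                rw [Real.sqrt_mul (hnn_nonneg x), hA, Real.sqrt_sq (norm_nonneg _),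
                  Real.sqrt_eq_rpow]
        have hexp : q + 1 / 2 = (p - 1) / 2 := by rw [hq]; ring
        calc ‖f x‖ = nn x ^ q * |s x| := h1
          _ ≤ nn x ^ q * (nn x ^ (1 / 2 : ℝ) * ‖η‖) :=
              mul_le_mul_of_nonneg_left h2 (Real.rpow_nonneg (hnn_nonneg x) q)
          _ = nn x ^ ((p - 1) / 2) * ‖η‖ := by
              rw [← mul_assoc,
                ← Real.rpow_add' (hnn_nonneg x)
                  (by rw [hexp]; exact ne_of_gt (by linarith)), hexp]
      apply squeeze_zero_norm hbound
      have hc : ContinuousAt (fun x => nn x ^ ((p - 1) / 2) * ‖η‖) t :=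
        ((Real.continuousAt_rpow_const (nn t) _ (Or.inr (by linarith))).comp
          hnn_cont.continuousAt).mul continuousAt_const
      have hval : nn t ^ ((p - 1) / 2) * ‖η‖ = 0 := by
        rw [ht, Real.zero_rpow (ne_of_gt (by linarith : (0:ℝ) < (p - 1) / 2)), zero_mul]
      simpa [hval] using hc.tendsto
    · exact ((Real.continuousAt_rpow_const (nn t) q (Or.inl ht)).comp
        hnn_cont.continuousAt).mul hs_cont.continuousAt
  -- pointwise bounds on D
  have hkey : ∀ t, nn t ≠ 0 → nn t ^ (q - 1) * s t ^ 2 ≤ A * nn t ^ q ∧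
      0 ≤ nn t ^ (q - 1) * s t ^ 2 := by
    intro t ht
    have hpos : 0 < nn t := lt_of_le_of_ne (hnn_nonneg t) (Ne.symm ht)
    constructor
    · calc nn t ^ (q - 1) * s t ^ 2 ≤ nn t ^ (q - 1) * (nn t * A) :=
          mul_le_mul_of_nonneg_left (hCS t) (Real.rpow_nonneg (hnn_nonneg t) _)
        _ = A * nn t ^ q := by
            rw [← mul_assoc, ← Real.rpow_add_one ht]
            ring_nf
    · positivity
  have hlb : ∀ t, min 1 (p - 1) * A * nn t ^ q ≤ D t := by
    intro t
    by_cases ht : nn t = 0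
    · have hDt : D t = nn t ^ q * A := by
        simp only [hD]
        simp [hs_zero t ht]
      rw [hDt]
      have h1 : min 1 (p - 1) ≤ 1 := min_le_left _ _
      have h2 : 0 ≤ nn t ^ q * A := mul_nonneg (Real.rpow_nonneg (hnn_nonneg t) q) hA0.le
      nlinarith
    · obtain ⟨hk1, hk2⟩ := hkey t ht
      rcases le_total p 2 with hp2 | hp2
      · rw [min_eq_right (by linarith)]
        simp only [hD]
        nlinarith [mul_nonneg (by linarith : (0:ℝ) ≤ 2 - p) (sub_nonneg.2 hk1)]
      · rw [min_eq_left (by linarith)]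
        simp only [hD]
        nlinarith [mul_nonneg (by linarith : (0:ℝ) ≤ p - 2) hk2]
  have hub : ∀ t, D t ≤ max 1 (p - 1) * A * nn t ^ q := by
    intro t
    by_cases ht : nn t = 0
    · have hDt : D t = nn t ^ q * A := by
        simp only [hD]
        simp [hs_zero t ht]
      rw [hDt]
      have h1 : 1 ≤ max 1 (p - 1) := le_max_left _ _
      have h2 : 0 ≤ nn t ^ q * A := mul_nonneg (Real.rpow_nonneg (hnn_nonneg t) q) hA0.le
      nlinarith
    · obtain ⟨hk1, hk2⟩ := hkey t ht
      rcases le_total p 2 with hp2 | hp2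
      · rw [max_eq_left (by linarith)]
        simp only [hD]
        nlinarith [mul_nonneg (by linarith : (0:ℝ) ≤ 2 - p) hk2]
      · rw [max_eq_right (by linarith)]
        simp only [hD]
        nlinarith [mul_nonneg (by linarith : (0:ℝ) ≤ p - 2) (sub_nonneg.2 hk1)]
  -- structure of the zero set of nn
  have hdichotomy : (∀ t, nn t ≠ 0) ∨ ∃ t₀ : ℝ, ∀ t, nn t = (t - t₀) ^ 2 * A := by
    by_cases hex : ∃ t₀ : ℝ, nn t₀ = 0
    · right
      obtain ⟨t₀, ht₀⟩ := hex
      refine ⟨t₀, fun t => ?_⟩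
      have hu0 : u t₀ = 0 := by
        have h1 := hnn_eq t₀
        rw [ht₀] at h1
        have h2 : ‖u t₀‖ = 0 := by
          have h5 : ‖u t₀‖ ^ 2 = 0 := h1.symm
          exact pow_eq_zero_iff (two_ne_zero) |>.mp h5
        exact norm_eq_zero.1 h2
      have hξ : ξ = t₀ • η := by
        have h3 : t₀ • η - ξ = 0 := hu0
        exact (sub_eq_zero.1 h3).symm
      have hut : u t = (t - t₀) • η := by
        show t • η - ξ = (t - t₀) • η
        rw [hξ, sub_smul]
      have h4 : nn t = inner ℝ ((t - t₀) • η) ((t - t₀) • η) := by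
        show (inner ℝ (u t) (u t) : ℝ) = _
        rw [hut]
      rw [h4, real_inner_smul_left, real_inner_smul_right, real_inner_self_eq_norm_sq, ← hA]
      ring
    · left
      push_neg at hex
      exact hex
  -- integrability of the comparison function G
  have hGint : IntervalIntegrable (fun t => nn t ^ q) volume 0 1 := by
    rcases hdichotomy with hall | ⟨t₀, hform⟩
    · apply Continuous.intervalIntegrable
      rw [continuous_iff_continuousAt]
      intro t
      exact (Real.continuousAt_rpow_const (nn t) q (Or.inl (hall t))).comp
        hnn_cont.continuousAt
    · have hfun : (fun t => nn t ^ q) = fun t => |t - t₀| ^ (p - 2) * A ^ q := by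
        funext t
        rw [hform t, Real.mul_rpow (sq_nonneg _) hA0.le]
        congr 1
        rw [← sq_abs, ← rpow_eq_sq_rpow_half (abs_nonneg _)]
      rw [hfun]
      have h1 := (absRpow_intervalIntegrable (by linarith : (-1:ℝ) < p - 2)
        (-t₀) (1 - t₀)).comp_sub_right t₀
      have h2 : IntervalIntegrable (fun x => |x - t₀| ^ (p - 2)) volume 0 1 := by
        simpa using h1
      exact h2.mul_const _
  -- integrability of D
  have hDmeas : Measurable D := by
    have hm1 : Measurable fun t => nn t ^ (q - 1) := hnn_cont.measurable.pow measurable_const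
    have hm2 : Measurable fun t => nn t ^ q := hnn_cont.measurable.pow measurable_const
    exact ((measurable_const.mul hm1).mul (hs_cont.pow 2).measurable).add
      (hm2.mul measurable_const)
  have hDint : IntervalIntegrable D volume 0 1 := by
    apply (hGint.const_mul (max 1 (p - 1) * A)).mono_fun hDmeas.aestronglyMeasurable
    refine Filter.Eventually.of_forall fun t => ?_
    have h1 := hlb t
    have h2 := hub t
    have h3 : 0 ≤ min 1 (p - 1) := le_min zero_le_one (by linarith)
    have h4 : 0 ≤ nn t ^ q := Real.rpow_nonneg (hnn_nonneg t) q
    have h5 : 0 ≤ D t := le_trans (by positivity) h1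
    have h6 : 0 ≤ max 1 (p - 1) * A * nn t ^ q := by
      have : (0:ℝ) ≤ max 1 (p - 1) := le_trans zero_le_one (le_max_left _ _)
      positivity
    show ‖D t‖ ≤ ‖max 1 (p - 1) * A * nn t ^ q‖
    rw [Real.norm_eq_abs, Real.norm_eq_abs, abs_of_nonneg h5, abs_of_nonneg h6]
    exact h2
  -- FTC
  have hFTC : ∫ t in (0:ℝ)..1, D t = f 1 - f 0 := by
    rcases hdichotomy with hall | ⟨t₀, hform⟩
    · exact integral_eq_sub_of_hasDeriv_right_of_le zero_le_one hf_cont.continuousOn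
        (fun x _ => (hf_deriv x (hall x)).hasDerivWithinAt) hDint
    · have hgood : ∀ x : ℝ, x ≠ t₀ → nn x ≠ 0 := by
        intro x hx
        rw [hform x]
        exact ne_of_gt (mul_pos (lt_of_le_of_ne (sq_nonneg _)
          (Ne.symm (pow_ne_zero 2 (sub_ne_zero.2 hx)))) hA0)
      by_cases hmem : t₀ ∈ Ioo (0:ℝ) 1
      · have hsub1 : uIcc (0:ℝ) t₀ ⊆ uIcc (0:ℝ) 1 := by
          rw [uIcc_of_le hmem.1.le, uIcc_of_le zero_le_one]
          exact Icc_subset_Icc le_rfl hmem.2.le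
        have hsub2 : uIcc t₀ (1:ℝ) ⊆ uIcc (0:ℝ) 1 := by
          rw [uIcc_of_le hmem.2.le, uIcc_of_le zero_le_one]
          exact Icc_subset_Icc hmem.1.le le_rfl
        have hint1 : IntervalIntegrable D volume 0 t₀ := hDint.mono_set hsub1
        have hint2 : IntervalIntegrable D volume t₀ 1 := hDint.mono_set hsub2
        have h1 : ∫ t in (0:ℝ)..t₀, D t = f t₀ - f 0 :=
          integral_eq_sub_of_hasDeriv_right_of_le hmem.1.le hf_cont.continuousOn
            (fun x hx => (hf_deriv x (hgood x hx.2.ne)).hasDerivWithinAt) hint1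
        have h2 : ∫ t in t₀..(1:ℝ), D t = f 1 - f t₀ :=
          integral_eq_sub_of_hasDeriv_right_of_le hmem.2.le hf_cont.continuousOn
            (fun x hx => (hf_deriv x (hgood x hx.1.ne')).hasDerivWithinAt) hint2
        rw [← integral_add_adjacent_intervals hint1 hint2, h1, h2]
        ring
      · have hne : ∀ x ∈ Ioo (0:ℝ) 1, nn x ≠ 0 := fun x hx =>
          hgood x (fun h => hmem (h ▸ hx))
        exact integral_eq_sub_of_hasDeriv_right_of_le zero_le_one hf_cont.continuousOn
          (fun x hx => (hf_deriv x (hne x hx)).hasDerivWithinAt) hDint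
  -- identify f 1 - f 0 with the inner ℝ product
  have hid : f 1 - f 0 = (inner ℝ (Phi p η ξ) η : ℝ) := by
    have hu1 : u 1 = η - ξ := by show (1:ℝ) • η - ξ = η - ξ; rw [one_smul]
    have hu0 : u 0 = -ξ := by show (0:ℝ) • η - ξ = -ξ; rw [zero_smul, zero_sub]
    have hnn1 : nn 1 ^ q = ‖η - ξ‖ ^ (p - 2) := by
      rw [hq, hnn_eq, hu1, ← rpow_eq_sq_rpow_half (norm_nonneg _)]
    have hnn0 : nn 0 ^ q = ‖ξ‖ ^ (p - 2) := by
      rw [hq, hnn_eq, hu0, norm_neg, ← rpow_eq_sq_rpow_half (norm_nonneg _)]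
    have hs1 : s 1 = inner ℝ (η - ξ) η := by show (inner ℝ (u 1) η : ℝ) = _; rw [hu1]
    have hs0 : s 0 = -(inner ℝ ξ η : ℝ) := by
      show (inner ℝ (u 0) η : ℝ) = _
      rw [hu0, inner_neg_left]
    have hPhi : (inner ℝ (Phi p η ξ) η : ℝ)
        = ‖η - ξ‖ ^ (p - 2) * inner ℝ (η - ξ) η + ‖ξ‖ ^ (p - 2) * inner ℝ ξ η := by
      simp only [Phi, inner_add_left, real_inner_smul_left]
    simp only [hf]
    rw [hnn1, hnn0, hs1, hs0, hPhi]
    ring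
  -- identify the integrand
  have hint_eq : (∫ t in (0:ℝ)..1, ‖t • η - ξ‖ ^ (p - 2)) = ∫ t in (0:ℝ)..1, nn t ^ q := by
    apply intervalIntegral.integral_congr
    intro t _
    show ‖t • η - ξ‖ ^ (p - 2) = nn t ^ q
    rw [hq, hnn_eq, ← rpow_eq_sq_rpow_half (norm_nonneg _)]
  rw [hint_eq, ← hid, ← hFTC]
  constructor
  · rw [← intervalIntegral.integral_const_mul]
    refine intervalIntegral.integral_mono_on zero_le_one ?_ hDint fun t _ => ?_
    · exact hGint.const_mul _
    · linarith [hlb t]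
  · rw [← intervalIntegral.integral_const_mul]
    refine intervalIntegral.integral_mono_on zero_le_one hDint ?_ fun t _ => ?_
    · exact hGint.const_mul _
    · linarith [hub t]
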